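/- arXiv:2012.02815 — 3 statements merged into one kernel-verified Lean document; each statement's English description precedes it below -/
import Mathlib

section
/- Let $i, j$ be nonnegative integers with $i \leq j$. Then $\sum_{e=0}^{2i} (-1)^e \frac{\binom{2i}{e}}{\binom{i+j}{e}\binom{i+j}{2i-e}} \binom{j}{e}\binom{j}{2i-e} = (-1)^i \frac{\binom{2i}{i}}{\binom{i+j}{i}^2}$. -/
open Finset Polynomial Nat fwdDiff

lemma eval_one_hasse (p : ℚ[X]) (m : ℕ) (h : p.natDegree ≤ m + 1) :
    ((hasseDeriv m p).eval 1) = p.coeff m + (m + 1) * p.coeff (m + 1) := by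
  have hd : (hasseDeriv m p).natDegree < 2 := by
    have := p.natDegree_hasseDeriv_le m
    omega
  rw [Polynomial.eval_eq_sum_range' hd]
  simp [Finset.sum_range_succ, hasseDeriv_coeff, Nat.add_comm 1 m, Nat.choose_succ_self_right]

lemma coeff_shift_sub (p : ℚ[X]) (m : ℕ) (h : p.natDegree ≤ m + 1) :
    (taylor (1:ℚ) p - p).coeff m = (m + 1) * p.coeff (m + 1) := by
  rw [coeff_sub, taylor_coeff, eval_one_hasse p m h]; ring

lemma deg_shift_sub (p : ℚ[X]) (n : ℕ) (h : p.natDegree ≤ n + 1) :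
    (taylor (1:ℚ) p - p).natDegree ≤ n := by
  rw [natDegree_le_iff_coeff_eq_zero]
  intro m hm
  rw [coeff_shift_sub p m (le_trans h (by omega)),
    coeff_eq_zero_of_natDegree_lt (by omega), mul_zero]

lemma fwdDiff_iter_eval (n : ℕ) : ∀ p : ℚ[X], p.natDegree ≤ n →
    (Δ_[(1:ℕ)])^[n] (fun x : ℕ ↦ p.eval (x : ℚ)) = fun _ ↦ (n ! : ℚ) * p.coeff n := by
  induction n with
  | zero =>
    intro p hp
    funext x
    simp only [Function.iterate_zero, id_eq, Nat.factorial_zero, Nat.cast_one, one_mul]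
    conv_lhs => rw [Polynomial.eq_C_of_natDegree_le_zero hp]
    simp
  | succ n IH =>
    intro p hp
    rw [Function.iterate_succ_apply]
    have hq : Δ_[(1:ℕ)] (fun x : ℕ ↦ p.eval (x:ℚ)) = fun x : ℕ ↦ (taylor (1:ℚ) p - p).eval (x:ℚ) := by
      funext x
      simp only [fwdDiff, eval_sub, taylor_eval]
      push_cast
      ring
    rw [hq, IH _ (deg_shift_sub p n hp), coeff_shift_sub p n hp]
    funext x
    rw [Nat.factorial_succ]
    push_cast
    ring

lemma neg_pow_aux (n e : ℕ) (he : e ≤ n) : ((-1:ℚ))^(n-e) = (-1)^n * (-1)^e := by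
  rw [← pow_add]
  have h : n + e = (n - e) + 2*e := by omega
  rw [h, pow_add, pow_mul, neg_one_sq, one_pow, mul_one]

lemma alt_sum_eval (n : ℕ) (p : ℚ[X]) (hp : p.natDegree ≤ n) :
    ∑ e ∈ range (n+1), (-1:ℚ)^e * (n.choose e : ℚ) * p.eval (e:ℚ)
      = (-1:ℚ)^n * n ! * p.coeff n := by
  have h := fwdDiff_iter_eq_sum_shift (1:ℕ) (fun x : ℕ ↦ p.eval (x:ℚ)) n 0
  rw [fwdDiff_iter_eval n p hp] at h
  simp only [smul_eq_mul, mul_one, zero_add, zsmul_eq_mul, Int.cast_mul, Int.cast_pow,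
    Int.cast_neg, Int.cast_one, Int.cast_natCast] at h
  have hsq : ((-1:ℚ))^n * (-1)^n = 1 := by
    rw [← pow_add, ← two_mul, pow_mul, neg_one_sq, one_pow]
  have h2 : ∀ e ∈ range (n+1), (-1:ℚ)^e * (n.choose e : ℚ) * p.eval (e:ℚ)
      = (-1:ℚ)^n * ((-1:ℚ)^(n-e) * (n.choose e : ℚ) * p.eval (e:ℚ)) := by
    intro e he
    rw [neg_pow_aux n e (by simpa [Nat.lt_succ_iff] using he)]
    linear_combination (-((-1:ℚ)^e * (n.choose e : ℚ) * p.eval (e:ℚ))) * hsq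
  rw [Finset.sum_congr rfl h2, ← Finset.mul_sum, ← h]
  ring

lemma prod_fact (a : ℕ) : ∀ m : ℕ, ∏ k ∈ range m, ((a:ℚ) + k + 1) = ((a+m)! : ℚ) / (a ! : ℚ) := by
  intro m
  induction m with
  | zero => simp [div_self (Nat.cast_ne_zero.mpr (Nat.factorial_ne_zero a) : ((a ! : ℕ):ℚ) ≠ 0)]
  | succ m IH =>
    rw [prod_range_succ, IH, show a + (m+1) = (a+m)+1 from rfl, Nat.factorial_succ]
    have h1 : ((a !:ℕ) : ℚ) ≠ 0 := Nat.cast_ne_zero.mpr (Nat.factorial_ne_zero a)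
    field_simp
    push_cast
    ring

theorem stmt_0 (i j : ℕ) (hij : i ≤ j) :
    ∑ e ∈ Finset.range (2 * i + 1),
      (-1 : ℚ) ^ e * (((2 * i).choose e : ℚ) /
        (((i + j).choose e : ℚ) * ((i + j).choose (2 * i - e) : ℚ))) *
        (j.choose e : ℚ) * (j.choose (2 * i - e) : ℚ)
      = (-1 : ℚ) ^ i * ((2 * i).choose i : ℚ) / ((i + j).choose i : ℚ) ^ 2 := by
  set P : ℚ[X] := (∏ k ∈ range i, (C ((j:ℚ) + k + 1) - X)) *
      ∏ k ∈ range i, (X + C ((j:ℚ) - 2*i + k + 1)) with hP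
  have hne1 : ∀ a : ℚ, (C a - X : ℚ[X]) ≠ 0 := by
    intro a
    intro hcontra
    have : (C a - X : ℚ[X]).coeff 1 = 0 := by rw [hcontra]; simp
    simp [coeff_sub] at this
  have hd1 : ∀ a : ℚ, (C a - X : ℚ[X]).natDegree = 1 := by
    intro a
    rw [show (C a - X : ℚ[X]) = -(X - C a) by ring, natDegree_neg, natDegree_X_sub_C]
  have hl1 : ∀ a : ℚ, (C a - X : ℚ[X]).leadingCoeff = -1 := by
    intro a
    rw [leadingCoeff, hd1 a]
    simp [coeff_sub]
  have hprodne1 : (∏ k ∈ range i, (C ((j:ℚ) + k + 1) - X)) ≠ 0 :=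
    Finset.prod_ne_zero_iff.mpr fun k _ ↦ hne1 _
  have hmon2 : (∏ k ∈ range i, (X + C ((j:ℚ) - 2*i + k + 1))).Monic :=
    monic_prod_of_monic _ _ fun k _ ↦ monic_X_add_C _
  have hdeg1 : (∏ k ∈ range i, (C ((j:ℚ) + k + 1) - X)).natDegree = i := by
    rw [natDegree_prod _ _ fun k _ ↦ hne1 _]
    simp only [hd1]
    simp
  have hdeg2 : (∏ k ∈ range i, (X + C ((j:ℚ) - 2*i + k + 1))).natDegree = i := by
    rw [natDegree_prod _ _ fun k _ ↦ (monic_X_add_C _).ne_zero]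
    simp only [natDegree_X_add_C]
    simp
  have hPdeg : P.natDegree = 2*i := by
    rw [hP, natDegree_mul hprodne1 hmon2.ne_zero, hdeg1, hdeg2]
    omega
  have hPcoeff : P.coeff (2*i) = (-1:ℚ)^i := by
    rw [← hPdeg, coeff_natDegree, hP, leadingCoeff_mul, hmon2.leadingCoeff, mul_one,
      leadingCoeff_prod]
    simp only [hl1]
    simp
  have hfact : ∀ n : ℕ, ((n ! : ℕ) : ℚ) ≠ 0 := fun n ↦ Nat.cast_ne_zero.mpr (Nat.factorial_ne_zero n)
  have key : ∀ e ∈ range (2*i+1),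
      (-1 : ℚ) ^ e * (((2 * i).choose e : ℚ) /
        (((i + j).choose e : ℚ) * ((i + j).choose (2 * i - e) : ℚ))) *
        (j.choose e : ℚ) * (j.choose (2 * i - e) : ℚ)
      = ((j ! : ℚ) / ((i+j)! : ℚ))^2 * ((-1:ℚ)^e * (((2*i).choose e : ℚ)) * P.eval (e:ℚ)) := by
    intro e he
    rw [Finset.mem_range] at he
    have he2 : e ≤ 2*i := by omega
    have hPe : P.eval (e:ℚ) = (∏ k ∈ range i, ((j:ℚ) + k + 1 - e)) *
        ∏ k ∈ range i, ((e:ℚ) + ((j:ℚ) - 2*i + k + 1)) := by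
      rw [hP]
      simp [eval_prod]
    by_cases h1 : j < e
    · have hc0 : (j.choose e : ℚ) = 0 := by
        rw [Nat.choose_eq_zero_of_lt h1]; simp
      have hp0 : P.eval (e:ℚ) = 0 := by
        rw [hPe]
        have hk : e - j - 1 ∈ range i := by rw [Finset.mem_range]; omega
        have hfac : (j:ℚ) + ((e - j - 1 : ℕ):ℚ) + 1 - (e:ℚ) = 0 := by
          rw [show e - j - 1 = e - (j+1) by omega, Nat.cast_sub (by omega)]
          push_cast
          ring
        rw [Finset.prod_eq_zero hk hfac, zero_mul]
      rw [hc0, hp0]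
      ring
    · by_cases h2 : j < 2*i - e
      · have hc0 : (j.choose (2*i-e) : ℚ) = 0 := by
          rw [Nat.choose_eq_zero_of_lt h2]; simp
        have hp0 : P.eval (e:ℚ) = 0 := by
          rw [hPe]
          have hk : 2*i - e - j - 1 ∈ range i := by rw [Finset.mem_range]; omega
          have hfac : (e:ℚ) + ((j:ℚ) - 2*(i:ℚ) + ((2*i - e - j - 1 : ℕ):ℚ) + 1) = 0 := by
            rw [show 2*i - e - j - 1 = 2*i - (e + j + 1) by omega, Nat.cast_sub (by omega)]
            push_cast
            ring
          rw [mul_eq_zero_of_right _ (Finset.prod_eq_zero hk hfac)]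
        rw [hc0, hp0]
        ring
      · -- main case
        push_neg at h1 h2
        set A := j - e with hA
        set B := j - (2*i - e) with hB
        have hAc : ((A : ℕ) : ℚ) = (j:ℚ) - e := by rw [hA]; push_cast [h1]; ring
        have hBc : ((B : ℕ) : ℚ) = (j:ℚ) - 2*i + e := by
          rw [hB]
          push_cast [h2, he2]
          ring
        have hpr1 : (∏ k ∈ range i, ((j:ℚ) + k + 1 - e)) = ((A+i)! : ℚ) / (A ! : ℚ) := by
          rw [← prod_fact]
          exact Finset.prod_congr rfl fun k _ ↦ by rw [hAc]; ring
        have hpr2 : (∏ k ∈ range i, ((e:ℚ) + ((j:ℚ) - 2*i + k + 1))) = ((B+i)! : ℚ) / (B ! : ℚ) := by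
          rw [← prod_fact]
          exact Finset.prod_congr rfl fun k _ ↦ by rw [hBc]; ring
        rw [hPe, hpr1, hpr2]
        rw [Nat.cast_choose ℚ he2, Nat.cast_choose ℚ (show e ≤ i + j by omega),
          Nat.cast_choose ℚ (show 2*i - e ≤ i + j by omega),
          Nat.cast_choose ℚ h1, Nat.cast_choose ℚ h2]
        rw [show i + j - e = A + i by omega, show i + j - (2*i - e) = B + i by omega,
          show j - e = A from rfl, show j - (2*i - e) = B from rfl]
        have c1 := hfact e
        have c2 := hfact (2*i - e)
        have c3 := hfact (A + i)
        have c4 := hfact (B + i)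
        have c5 := hfact A
        have c6 := hfact B
        have c7 := hfact (i + j)
        have c8 := hfact j
        have c9 := hfact (2*i)
        field_simp
  rw [Finset.sum_congr rfl key, ← Finset.mul_sum, alt_sum_eval (2*i) P (le_of_eq hPdeg), hPcoeff]
  rw [Nat.cast_choose ℚ (show i ≤ 2*i by omega), Nat.cast_choose ℚ (show i ≤ i+j by omega),
    show 2*i - i = i by omega, show i + j - i = j by omega]
  have hsq : ((-1:ℚ))^(2*i) = 1 := by rw [pow_mul, neg_one_sq, one_pow]
  rw [hsq]
  have c1 := hfact i
  have c2 := hfact j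
  have c3 := hfact (i+j)
  have c4 := hfact (2*i)
  field_simp
end

section
/- Let $f, m, n$ be positive integers with $f \leq m \leq n$. Then $\sum_{e=0}^{f} (-1)^e \frac{\binom{f}{e}\binom{n-m}{e}}{\binom{n}{e}} = \frac{\binom{m}{f}}{\binom{n}{f}}$. In particular the left-hand sum is nonzero. -/
open Finset

lemma key : ∀ a n f : ℕ, a + f ≤ n →
    ∑ e ∈ Finset.range (f+1), (-1:ℚ)^e * (a.choose e : ℚ) * (((n-e).choose (f-e) : ℕ) : ℚ)
      = (((n-a).choose f : ℕ) : ℚ) := by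
  intro a
  induction a with
  | zero =>
    intro n f h
    rw [Finset.sum_eq_single 0]
    · simp
    · intro b _ hb
      have : (0:ℕ).choose b = 0 := Nat.choose_eq_zero_of_lt (Nat.pos_of_ne_zero hb)
      simp [this]
    · simp
  | succ a ih =>
    intro n f h
    rw [Finset.sum_range_succ']
    have hsplit : ∀ i ∈ Finset.range f,
        (-1:ℚ)^(i+1) * ((a+1).choose (i+1) : ℚ) * (((n-(i+1)).choose (f-(i+1)) : ℕ) : ℚ)
        = (-1:ℚ)^(i+1) * (a.choose (i+1) : ℚ) * (((n-(i+1)).choose (f-(i+1)) : ℕ) : ℚ)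
          + (-1:ℚ)^(i+1) * (a.choose i : ℚ) * (((n-(i+1)).choose (f-(i+1)) : ℕ) : ℚ) := by
      intro i _
      rw [Nat.choose_succ_succ]
      push_cast
      ring
    rw [Finset.sum_congr rfl hsplit, Finset.sum_add_distrib]
    have hA : (∑ i ∈ Finset.range f,
        (-1:ℚ)^(i+1) * (a.choose (i+1) : ℚ) * (((n-(i+1)).choose (f-(i+1)) : ℕ) : ℚ))
        + (-1:ℚ)^0 * ((a+1).choose 0 : ℚ) * (((n-0).choose (f-0) : ℕ) : ℚ)
        = (((n-a).choose f : ℕ) : ℚ) := by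
      have := ih n f (by omega)
      rw [Finset.sum_range_succ'] at this
      simpa using this
    cases f with
    | zero =>
      simp only [Finset.range_zero, Finset.sum_empty] at *
      simp only [Finset.range_zero, Finset.sum_empty, zero_add]
      norm_num
    | succ g =>
      have hB : (∑ i ∈ Finset.range (g+1),
          (-1:ℚ)^(i+1) * (a.choose i : ℚ) * (((n-(i+1)).choose (g+1-(i+1)) : ℕ) : ℚ))
          = -(((n-1-a).choose g : ℕ) : ℚ) := by
        have hmain := ih (n-1) g (by omega)
        have : ∀ i ∈ Finset.range (g+1),
            (-1:ℚ)^(i+1) * (a.choose i : ℚ) * (((n-(i+1)).choose (g+1-(i+1)) : ℕ) : ℚ)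
            = -((-1:ℚ)^i * (a.choose i : ℚ) * (((n-1-i).choose (g-i) : ℕ) : ℚ)) := by
          intro i _
          have e1 : n - (i+1) = n - 1 - i := by omega
          have e2 : g + 1 - (i+1) = g - i := by omega
          rw [e1, e2]; ring
        rw [Finset.sum_congr rfl this, Finset.sum_neg_distrib, hmain]
      rw [add_right_comm, hA, hB]
      have e3 : n - a = (n - (a+1)) + 1 := by omega
      have e4 : n - 1 - a = n - (a+1) := by omega
      rw [e3, e4, Nat.choose_succ_succ]
      push_cast
      ring

theorem stmt_5 (f m n : ℕ) (hf : 0 < f) (hfm : f ≤ m) (hmn : m ≤ n) :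
    (∑ e ∈ Finset.range (f + 1),
        (-1 : ℚ) ^ e * ((f.choose e : ℚ) * ((n - m).choose e : ℚ)) / (n.choose e : ℚ))
      = (m.choose f : ℚ) / (n.choose f : ℚ) ∧
    (∑ e ∈ Finset.range (f + 1),
        (-1 : ℚ) ^ e * ((f.choose e : ℚ) * ((n - m).choose e : ℚ)) / (n.choose e : ℚ)) ≠ 0 := by
  have hfn : f ≤ n := hfm.trans hmn
  have hnf : (0:ℚ) < (n.choose f : ℚ) := by
    exact_mod_cast Nat.choose_pos hfn
  have hmf : (0:ℚ) < (m.choose f : ℚ) := by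
    exact_mod_cast Nat.choose_pos hfm
  have hterm : ∀ e ∈ Finset.range (f+1),
      (-1 : ℚ) ^ e * ((f.choose e : ℚ) * ((n - m).choose e : ℚ)) / (n.choose e : ℚ)
      = ((-1:ℚ)^e * ((n-m).choose e : ℚ) * (((n-e).choose (f-e) : ℕ) : ℚ)) / (n.choose f : ℚ) := by
    intro e he
    have hef : e ≤ f := by simp at he; omega
    have hne : (0:ℚ) < (n.choose e : ℚ) := by
      exact_mod_cast Nat.choose_pos (hef.trans hfn)
    have hmul : (n.choose f : ℚ) * (f.choose e : ℚ) = (n.choose e : ℚ) * (((n-e).choose (f-e) : ℕ) : ℚ) := by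
      exact_mod_cast congrArg (Nat.cast : ℕ → ℚ) (Nat.choose_mul (n := n) hef)
    field_simp
    linear_combination ((((n-m).choose e : ℕ) : ℚ)) * hmul
  rw [Finset.sum_congr rfl hterm, ← Finset.sum_div]
  have hkey : ∑ e ∈ Finset.range (f+1),
      ((-1:ℚ)^e * ((n-m).choose e : ℚ) * (((n-e).choose (f-e) : ℕ) : ℚ)) = (m.choose f : ℚ) := by
    have := key (n-m) n f (by omega)
    have hnm : n - (n - m) = m := by omega
    rw [hnm] at this
    rw [← this]
  rw [hkey]
  exact ⟨rfl, by positivity⟩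
end

section
/- The coefficient $y_{m,f}^{p, b^{2f}}$ appearing in the lowering computation equals the hypergeometric-type sum $\sum_{e=0}^{f} (-1)^e \frac{\binom{f}{e}}{\binom{n}{e}\binom{2f}{f-e}}\binom{n-m}{e}\binom{2f}{f-e}$, and this simplifies to $\sum_{e=0}^{f} (-1)^e \frac{\binom{f}{e}\binom{n-m}{e}}{\binom{n}{e}}$, which equals $\frac{\binom{m}{f}}{\binom{n}{f}}$ and is therefore positive; here $f, m, n$ are positive integers with $f \leq m \leq n$. -/
open Finset

lemma aux (j : ℕ) : ∀ n f : ℕ, j + f ≤ n →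
    ∑ e ∈ range (f + 1), (-1 : ℚ) ^ e * (j.choose e : ℚ) * (((n - e).choose (f - e)) : ℚ)
      = ((n - j).choose f : ℚ) := by
  induction j with
  | zero =>
    intro n f h
    rw [Finset.sum_eq_single 0]
    · simp
    · intro e he hne
      rcases Nat.exists_eq_succ_of_ne_zero hne with ⟨k, rfl⟩
      simp
    · simp
  | succ j ih =>
    intro n f h
    match f with
    | 0 => simp
    | g + 1 =>
      have hn1 : j + g ≤ n - 1 := by omega
      have hn : j + (g + 1) ≤ n := by omega
      have key : ∑ e ∈ range (g + 2), (-1 : ℚ) ^ e * ((j+1).choose e : ℚ) * (((n - e).choose (g + 1 - e)) : ℚ)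
          = (∑ e ∈ range (g + 2), (-1 : ℚ) ^ e * (j.choose e : ℚ) * (((n - e).choose (g + 1 - e)) : ℚ))
            - ∑ e ∈ range (g + 1), (-1 : ℚ) ^ e * (j.choose e : ℚ) * ((((n-1) - e).choose (g - e)) : ℚ) := by
        rw [Finset.sum_range_succ' _ (g+1), Finset.sum_range_succ' (fun e => (-1 : ℚ) ^ e * (j.choose e : ℚ) * (((n - e).choose (g + 1 - e)) : ℚ)) (g+1)]
        have : ∀ e, e ∈ range (g+1) →
            (-1 : ℚ) ^ (e+1) * ((j+1).choose (e+1) : ℚ) * (((n - (e+1)).choose (g + 1 - (e+1))) : ℚ)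
            = (-1 : ℚ) ^ (e+1) * (j.choose (e+1) : ℚ) * (((n - (e+1)).choose (g + 1 - (e+1))) : ℚ)
              - (-1 : ℚ) ^ e * (j.choose e : ℚ) * ((((n-1) - e).choose (g - e)) : ℚ) := by
          intro e he
          have h1 : n - (e+1) = (n-1) - e := by omega
          have h2 : g + 1 - (e+1) = g - e := by omega
          rw [h1, h2, Nat.choose_succ_succ]
          push_cast
          ring
        rw [Finset.sum_congr rfl this, Finset.sum_sub_distrib]
        simp only [Nat.choose_zero_right]
        ring
      rw [key, ih n (g+1) hn, ih (n-1) g hn1]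
      have h1 : n - 1 - j = n - (j+1) := by omega
      have h2 : n - j = (n - (j+1)) + 1 := by omega
      rw [h1, h2, Nat.choose_succ_succ]
      push_cast
      ring

theorem stmt_18 (f m n : ℕ) (hf : 0 < f) (hfm : f ≤ m) (hmn : m ≤ n) :
    (∑ e ∈ Finset.range (f + 1),
        (-1 : ℚ) ^ e * ((f.choose e : ℚ) /
          ((n.choose e : ℚ) * (((2 * f).choose (f - e) : ℚ)))) *
          ((n - m).choose e : ℚ) * ((2 * f).choose (f - e) : ℚ))
      = (∑ e ∈ Finset.range (f + 1),
          (-1 : ℚ) ^ e * ((f.choose e : ℚ) * ((n - m).choose e : ℚ)) / (n.choose e : ℚ)) ∧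
    (∑ e ∈ Finset.range (f + 1),
        (-1 : ℚ) ^ e * ((f.choose e : ℚ) * ((n - m).choose e : ℚ)) / (n.choose e : ℚ))
      = (m.choose f : ℚ) / (n.choose f : ℚ) ∧
    0 < (∑ e ∈ Finset.range (f + 1),
        (-1 : ℚ) ^ e * ((f.choose e : ℚ) * ((n - m).choose e : ℚ)) / (n.choose e : ℚ)) := by
  have hfn : f ≤ n := hfm.trans hmn
  have hnf : (0:ℚ) < (n.choose f : ℚ) := by exact_mod_cast Nat.choose_pos hfn
  have key : (∑ e ∈ Finset.range (f + 1),
        (-1 : ℚ) ^ e * ((f.choose e : ℚ) * ((n - m).choose e : ℚ)) / (n.choose e : ℚ))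
      = (m.choose f : ℚ) / (n.choose f : ℚ) := by
    have haux := aux (n - m) n f (by omega)
    have step : ∀ e ∈ Finset.range (f+1),
        (-1 : ℚ) ^ e * ((f.choose e : ℚ) * ((n - m).choose e : ℚ)) / (n.choose e : ℚ)
        = ((-1 : ℚ) ^ e * ((n-m).choose e : ℚ) * (((n - e).choose (f - e)) : ℚ)) / (n.choose f : ℚ) := by
      intro e he
      have hef : e ≤ f := by simpa using Nat.lt_succ_iff.mp (Finset.mem_range.mp he)
      have hen : (0:ℚ) < (n.choose e : ℚ) := by exact_mod_cast Nat.choose_pos (hef.trans hfn)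
      have hid : (n.choose f : ℚ) * (f.choose e : ℚ) = (n.choose e : ℚ) * ((n - e).choose (f - e) : ℚ) := by
        exact_mod_cast congrArg (Nat.cast : ℕ → ℚ) (Nat.choose_mul (n := n) hef)
      field_simp
      linear_combination (((n-m).choose e : ℚ)) * hid
    rw [Finset.sum_congr rfl step, ← Finset.sum_div, haux]
    rw [show n - (n - m) = m from by omega]
  refine ⟨?_, key, ?_⟩
  · apply Finset.sum_congr rfl
    intro e he
    have hef : e ≤ f := by simpa using Nat.lt_succ_iff.mp (Finset.mem_range.mp he)
    have h2f : (0:ℚ) < ((2*f).choose (f-e) : ℚ) := by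
      exact_mod_cast Nat.choose_pos (by omega)
    field_simp
  · rw [key]
    exact div_pos (by exact_mod_cast Nat.choose_pos hfm) hnf
end
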